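/- arXiv:2106.08142 — 2 statements merged into one kernel-verified Lean document; each statement's English description precedes it below -/
import Mathlib

section
/- In a cartesian bicategory, the Frobenius law implies the snake equations: writing cup = ¡ ; Δ : I → X⊗X and cap = ∇ ; ! : X⊗X → I, one has (cup ⊗ id_X) ; (id_X ⊗ cap) = id_X and (id_X ⊗ cup) ; (cap ⊗ id_X) = id_X; hence every object of a cartesian bicategory is self-dual. -/
open CategoryTheory MonoidalCategory

universe v u

/-- A cartesian bicategory: a poset-enriched symmetric monoidal category in which
every object carries a cocommutative comonoid (copy/discard) whose structure maps
have right adjoints (cocopy/codiscard), the Frobenius law holds, every morphism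
is a lax comonoid homomorphism, and the comonoids are coherent with the monoidal
structure. -/
class CartesianBicat (B : Type u) [Category.{v} B] [MonoidalCategory B]
    [SymmetricCategory B] [∀ X Y : B, PartialOrder (X ⟶ Y)] where
  comp_le_comp : ∀ {X Y Z : B} {f f' : X ⟶ Y} {g g' : Y ⟶ Z},
    f ≤ f' → g ≤ g' → f ≫ g ≤ f' ≫ g'
  tensorHom_le_tensorHom : ∀ {X Y X' Y' : B} {f f' : X ⟶ Y} {g g' : X' ⟶ Y'},
    f ≤ f' → g ≤ g' → (f ⊗ₘ g) ≤ (f' ⊗ₘ g')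
  copy : ∀ X : B, X ⟶ X ⊗ X
  discard : ∀ X : B, X ⟶ 𝟙_ B
  cocopy : ∀ X : B, X ⊗ X ⟶ X
  codiscard : ∀ X : B, 𝟙_ B ⟶ X
  -- cocommutative comonoid axioms
  copy_assoc : ∀ X : B,
    copy X ≫ (copy X ▷ X) ≫ (α_ X X X).hom = copy X ≫ (X ◁ copy X)
  copy_comm : ∀ X : B, copy X ≫ (β_ X X).hom = copy X
  copy_counit : ∀ X : B, copy X ≫ (discard X ▷ X) ≫ (λ_ X).hom = 𝟙 X
  -- cocopy and codiscard are right adjoint to copy and discard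
  copy_cocopy_unit : ∀ X : B, 𝟙 X ≤ copy X ≫ cocopy X
  cocopy_copy_counit : ∀ X : B, cocopy X ≫ copy X ≤ 𝟙 (X ⊗ X)
  discard_codiscard_unit : ∀ X : B, 𝟙 X ≤ discard X ≫ codiscard X
  codiscard_discard_counit : ∀ X : B, codiscard X ≫ discard X ≤ 𝟙 (𝟙_ B)
  -- the Frobenius law
  frobenius : ∀ X : B,
    cocopy X ≫ copy X = (X ◁ copy X) ≫ (α_ X X X).inv ≫ (cocopy X ▷ X)
  frobenius' : ∀ X : B,
    cocopy X ≫ copy X = (copy X ▷ X) ≫ (α_ X X X).hom ≫ (X ◁ cocopy X)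
  -- every morphism is a lax comonoid homomorphism
  lax_copy : ∀ {X Y : B} (R : X ⟶ Y), R ≫ copy Y ≤ copy X ≫ (R ⊗ₘ R)
  lax_discard : ∀ {X Y : B} (R : X ⟶ Y), R ≫ discard Y ≤ discard X
  -- coherence of the comonoids with the monoidal structure
  discard_unit : discard (𝟙_ B) = 𝟙 (𝟙_ B)
  copy_unit : copy (𝟙_ B) = (λ_ (𝟙_ B)).inv
  discard_tensor : ∀ X Y : B,
    discard (X ⊗ Y) = (discard X ⊗ₘ discard Y) ≫ (λ_ (𝟙_ B)).hom
  copy_tensor : ∀ X Y : B,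
    copy (X ⊗ Y) = (copy X ⊗ₘ copy Y) ≫ tensorμ X X Y Y

namespace CartesianBicat

variable {B : Type u} [Category.{v} B] [MonoidalCategory B] [SymmetricCategory B]
  [∀ X Y : B, PartialOrder (X ⟶ Y)] [CartesianBicat B]

/-- A map in a cartesian bicategory: a strict comonoid homomorphism. -/
def IsMap {X Y : B} (f : X ⟶ Y) : Prop :=
  f ≫ copy Y = copy X ≫ (f ⊗ₘ f) ∧ f ≫ discard Y = discard X

/-- The first projection of the tensor on maps. -/
def proj₁ (X Y : B) : X ⊗ Y ⟶ X := (X ◁ discard Y) ≫ (ρ_ X).hom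

/-- The second projection of the tensor on maps. -/
def proj₂ (X Y : B) : X ⊗ Y ⟶ Y := (discard X ▷ Y) ≫ (λ_ Y).hom

/-- The cup of the self-duality of an object. -/
def cup (X : B) : 𝟙_ B ⟶ X ⊗ X := codiscard X ≫ copy X

/-- The cap of the self-duality of an object. -/
def cap (X : B) : X ⊗ X ⟶ 𝟙_ B := cocopy X ≫ discard X

/-- The top element of a hom-poset. -/
def homTop (X Y : B) : X ⟶ Y := discard X ≫ codiscard Y

/-- The meet of two morphisms of a hom-poset. -/
def homMeet {X Y : B} (R S : X ⟶ Y) : X ⟶ Y :=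
  copy X ≫ (R ⊗ₘ S) ≫ cocopy Y

end CartesianBicat

open CartesianBicat

section Aux

variable {B : Type u} [Category.{v} B] [MonoidalCategory B] [SymmetricCategory B]
  [∀ X Y : B, PartialOrder (X ⟶ Y)] [CartesianBicat B]

/-- An adjunction in the poset-enriched category. -/
def Adj {X Y : B} (f : X ⟶ Y) (g : Y ⟶ X) : Prop :=
  𝟙 X ≤ f ≫ g ∧ g ≫ f ≤ 𝟙 Y

lemma adj_le {X Y : B} {f : X ⟶ Y} {g g' : Y ⟶ X} (h : Adj f g) (h' : Adj f g') :
    g ≤ g' := by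
  calc g = g ≫ 𝟙 X := by simp
    _ ≤ g ≫ (f ≫ g') := comp_le_comp le_rfl h'.1
    _ = (g ≫ f) ≫ g' := by simp
    _ ≤ 𝟙 Y ≫ g' := comp_le_comp h.2 le_rfl
    _ = g' := by simp

lemma adj_unique {X Y : B} {f : X ⟶ Y} {g g' : Y ⟶ X} (h : Adj f g) (h' : Adj f g') :
    g = g' :=
  le_antisymm (adj_le h h') (adj_le h' h)

lemma adj_id (X : B) : Adj (𝟙 X) (𝟙 X) := ⟨by simp, by simp⟩

lemma adj_comp {X Y Z : B} {f : X ⟶ Y} {g : Y ⟶ X} {f' : Y ⟶ Z} {g' : Z ⟶ Y}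
    (h : Adj f g) (h' : Adj f' g') : Adj (f ≫ f') (g' ≫ g) := by
  constructor
  · calc 𝟙 X ≤ f ≫ g := h.1
      _ = f ≫ 𝟙 Y ≫ g := by simp
      _ ≤ f ≫ (f' ≫ g') ≫ g := comp_le_comp le_rfl (comp_le_comp h'.1 le_rfl)
      _ = (f ≫ f') ≫ g' ≫ g := by simp
  · calc (g' ≫ g) ≫ f ≫ f' = g' ≫ (g ≫ f) ≫ f' := by simp
      _ ≤ g' ≫ 𝟙 Y ≫ f' := comp_le_comp le_rfl (comp_le_comp h.2 le_rfl)
      _ = g' ≫ f' := by simp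
      _ ≤ 𝟙 Z := h'.2

lemma adj_iso {X Y : B} (e : X ≅ Y) : Adj e.hom e.inv :=
  ⟨le_of_eq (by simp), le_of_eq (by simp)⟩

lemma whiskerRight_le {X Y : B} {f g : X ⟶ Y} (h : f ≤ g) (Z : B) :
    f ▷ Z ≤ g ▷ Z := by
  rw [← MonoidalCategory.tensorHom_id, ← MonoidalCategory.tensorHom_id]
  exact tensorHom_le_tensorHom h le_rfl

lemma whiskerLeft_le (Z : B) {X Y : B} {f g : X ⟶ Y} (h : f ≤ g) :
    Z ◁ f ≤ Z ◁ g := by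
  rw [← MonoidalCategory.id_tensorHom, ← MonoidalCategory.id_tensorHom]
  exact tensorHom_le_tensorHom le_rfl h

lemma adj_whiskerRight {X Y : B} {f : X ⟶ Y} {g : Y ⟶ X} (h : Adj f g) (Z : B) :
    Adj (f ▷ Z) (g ▷ Z) := by
  constructor
  · have := whiskerRight_le h.1 Z
    simpa [MonoidalCategory.comp_whiskerRight] using this
  · have := whiskerRight_le h.2 Z
    simpa [MonoidalCategory.comp_whiskerRight] using this

lemma adj_whiskerLeft (Z : B) {X Y : B} {f : X ⟶ Y} {g : Y ⟶ X} (h : Adj f g) :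
    Adj (Z ◁ f) (Z ◁ g) := by
  constructor
  · have := whiskerLeft_le Z h.1
    simpa [MonoidalCategory.whiskerLeft_comp] using this
  · have := whiskerLeft_le Z h.2
    simpa [MonoidalCategory.whiskerLeft_comp] using this

lemma adj_copy_cocopy (X : B) : Adj (copy X) (cocopy X) :=
  ⟨copy_cocopy_unit X, cocopy_copy_counit X⟩

lemma adj_discard_codiscard (X : B) : Adj (discard X) (codiscard X) :=
  ⟨discard_codiscard_unit X, codiscard_discard_counit X⟩

/-- The other counit law, from cocommutativity. -/
lemma copy_counit' (X : B) :
    copy X ≫ (X ◁ discard X) ≫ (ρ_ X).hom = 𝟙 X := by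
  conv_lhs => rw [← copy_comm X]
  rw [Category.assoc, ← BraidedCategory.braiding_naturality_left_assoc,
    braiding_rightUnitor]
  exact copy_counit X

/-- Right unit law for the cocopy monoid. -/
lemma cocopy_unit_right (X : B) :
    (λ_ X).inv ≫ (codiscard X ▷ X) ≫ cocopy X = 𝟙 X := by
  refine adj_unique (f := copy X ≫ (discard X ▷ X) ≫ (λ_ X).hom) ?_ ?_
  · simpa only [Category.assoc] using adj_comp (adj_copy_cocopy X)
      (adj_comp (adj_whiskerRight (adj_discard_codiscard X) X) (adj_iso (λ_ X)))
  · rw [copy_counit X]; exact adj_id X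

/-- Left unit law for the cocopy monoid. -/
lemma cocopy_unit_left (X : B) :
    (ρ_ X).inv ≫ (X ◁ codiscard X) ≫ cocopy X = 𝟙 X := by
  refine adj_unique (f := copy X ≫ (X ◁ discard X) ≫ (ρ_ X).hom) ?_ ?_
  · simpa only [Category.assoc] using adj_comp (adj_copy_cocopy X)
      (adj_comp (adj_whiskerLeft X (adj_discard_codiscard X)) (adj_iso (ρ_ X)))
  · rw [copy_counit' X]; exact adj_id X

end Aux

/-- In a cartesian bicategory, the Frobenius law implies the snake equations for
`cup = ¡ ≫ Δ` and `cap = ∇ ≫ !`; hence every object is self-dual. -/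
theorem snake_equations {B : Type u} [Category.{v} B]
    [MonoidalCategory B] [SymmetricCategory B] [∀ X Y : B, PartialOrder (X ⟶ Y)]
    [CartesianBicat B] (X : B) :
    (λ_ X).inv ≫ (cup X ▷ X) ≫ (α_ X X X).hom ≫ (X ◁ cap X) ≫ (ρ_ X).hom = 𝟙 X ∧
    (ρ_ X).inv ≫ (X ◁ cup X) ≫ (α_ X X X).inv ≫ (cap X ▷ X) ≫ (λ_ X).hom = 𝟙 X := by
  constructor
  · simp only [cup, cap, MonoidalCategory.comp_whiskerRight,
      MonoidalCategory.whiskerLeft_comp, Category.assoc]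
    slice_lhs 3 5 => rw [← frobenius' X]
    simp only [Category.assoc]
    rw [reassoc_of% (cocopy_unit_right X)]
    exact copy_counit' X
  · simp only [cup, cap, MonoidalCategory.comp_whiskerRight,
      MonoidalCategory.whiskerLeft_comp, Category.assoc]
    slice_lhs 3 5 => rw [← frobenius X]
    simp only [Category.assoc]
    rw [reassoc_of% (cocopy_unit_left X)]
    exact copy_counit X
end

section
/- In the bicategory of relations Bicat_P of an elementary existential doctrine P, an element R ∈ P(X×Y) is a map (strict comonoid homomorphism) if and only if it is total and single-valued in the internal sense: ∃_{π1 : X×Y → X}(R) = ⊤ and P_{⟨π1,π2⟩}(R) ∧ P_{⟨π1,π3⟩}(R) ≤ P_{⟨π2,π3⟩}(δ_Y), where the projections are out of X×Y×Y. -/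
open CategoryTheory CategoryTheory.Limits

universe v u w

/-- An elementary existential doctrine on a cartesian category `C`:
a contravariant functor into inf-semilattices with top, equipped with equality
predicates `δ`, and left adjoints to reindexing along both product projections,
satisfying Beck–Chevalley, Frobenius reciprocity and the elementarity condition. -/
structure EED (C : Type u) [Category.{v} C] [HasFiniteProducts C] where
  obj : C → Type w
  semi : ∀ A : C, SemilatticeInf (obj A)
  otop : ∀ A : C, OrderTop (obj A)
  map : ∀ {A B : C}, (A ⟶ B) → obj B → obj A
  map_id : ∀ (A : C) (α : obj A), map (𝟙 A) α = α
  map_comp : ∀ {A B D : C} (f : A ⟶ B) (g : B ⟶ D) (α : obj D),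
    map (f ≫ g) α = map f (map g α)
  map_inf : ∀ {A B : C} (f : A ⟶ B) (α β : obj B), map f (α ⊓ β) = map f α ⊓ map f β
  map_top : ∀ {A B : C} (f : A ⟶ B), map f (⊤ : obj B) = (⊤ : obj A)
  /-- the equality predicate -/
  δ : ∀ A : C, obj (A ⨯ A)
  /-- existential quantification along the first projection (quantifying away the
  second factor) -/
  exFst : ∀ {X A : C}, obj (X ⨯ A) → obj X
  exFst_adj : ∀ {X A : C} (β : obj (X ⨯ A)) (α : obj X),
    exFst β ≤ α ↔ β ≤ map prod.fst α
  /-- existential quantification along the second projection -/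
  exSnd : ∀ {X A : C}, obj (X ⨯ A) → obj A
  exSnd_adj : ∀ {X A : C} (β : obj (X ⨯ A)) (α : obj A),
    exSnd β ≤ α ↔ β ≤ map prod.snd α
  bcFst : ∀ {X X' A : C} (f : X' ⟶ X) (β : obj (X ⨯ A)),
    exFst (map (prod.map f (𝟙 A)) β) = map f (exFst β)
  bcSnd : ∀ {X A A' : C} (f : A' ⟶ A) (β : obj (X ⨯ A)),
    exSnd (map (prod.map (𝟙 X) f) β) = map f (exSnd β)
  frobFst : ∀ {X A : C} (α : obj X) (β : obj (X ⨯ A)),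
    exFst (map prod.fst α ⊓ β) = α ⊓ exFst β
  frobSnd : ∀ {X A : C} (α : obj A) (β : obj (X ⨯ A)),
    exSnd (map prod.snd α ⊓ β) = α ⊓ exSnd β
  /-- elementarity: `α ↦ P_{⟨π₁,π₂⟩}(α) ⊓ P_{⟨π₂,π₃⟩}(δ_A)` is left adjoint to
  reindexing along `id_X × Δ_A`. -/
  elem : ∀ {X A : C} (α : obj (X ⨯ A)) (γ : obj (X ⨯ (A ⨯ A))),
    (map (prod.map (𝟙 X) prod.fst) α ⊓ map prod.snd (δ A) ≤ γ) ↔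
      α ≤ map (prod.map (𝟙 X) (diag A)) γ

attribute [instance] EED.semi EED.otop

variable {C : Type u} [Category.{v} C] [HasFiniteProducts C]

namespace EED

/-- Composition in the bicategory of relations `Bicat_P`: realised using the
ambient object `(X ⨯ Z) ⨯ Y` and existential quantification of the middle factor. -/
noncomputable def rcomp (P : EED C) {X Y Z : C} (R : P.obj (X ⨯ Y)) (S : P.obj (Y ⨯ Z)) :
    P.obj (X ⨯ Z) :=
  P.exFst (P.map (prod.lift (prod.fst ≫ prod.fst) prod.snd) R ⊓
    P.map (prod.lift prod.snd (prod.fst ≫ prod.snd)) S)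

/-- The graph of a morphism of the base category. -/
noncomputable def graph (P : EED C) {X Y : C} (f : X ⟶ Y) : P.obj (X ⨯ Y) :=
  P.map (prod.map f (𝟙 Y)) (P.δ Y)

/-- Tensor product of relations in `Bicat_P`. -/
noncomputable def rtensor (P : EED C) {X Y X' Y' : C} (R : P.obj (X ⨯ Y)) (S : P.obj (X' ⨯ Y')) :
    P.obj ((X ⨯ X') ⨯ (Y ⨯ Y')) :=
  P.map (prod.map prod.fst prod.fst) R ⊓ P.map (prod.map prod.snd prod.snd) S

end EED

attribute [local simp] prod.lift_fst prod.lift_snd prod.lift_fst_assoc prod.lift_snd_assoc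

namespace EED

variable (P : EED C)

lemma map_map {A B D : C} (f : A ⟶ B) (g : B ⟶ D) (α : P.obj D) :
    P.map f (P.map g α) = P.map (f ≫ g) α := (P.map_comp f g α).symm

lemma map_mono {A B : C} (f : A ⟶ B) {α β : P.obj B} (h : α ≤ β) :
    P.map f α ≤ P.map f β := by
  rw [← inf_eq_left] at h ⊢
  rw [← P.map_inf, h]

lemma map_congr {A B : C} {f g : A ⟶ B} (h : f = g) (α : P.obj B) :
    P.map f α = P.map g α := by rw [h]

lemma diag_delta (A : C) : P.map (diag A) (P.δ A) = ⊤ := by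
  have h1 : P.map (prod.map (𝟙 A) prod.fst) (⊤ : P.obj (A ⨯ A)) ⊓
      P.map prod.snd (P.δ A) ≤ (P.map prod.snd (P.δ A) : P.obj (A ⨯ (A ⨯ A))) := by
    simp [P.map_top]
  have h2 := (P.elem (⊤ : P.obj (A ⨯ A)) (P.map prod.snd (P.δ A))).mp h1
  have h3 := P.map_mono (diag A) h2
  rw [P.map_top, P.map_map, P.map_map] at h3
  have e : (diag A ≫ prod.map (𝟙 A) (diag A)) ≫ prod.snd = diag A := by simp
  rw [e] at h3
  exact le_antisymm le_top h3

lemma pair_self_delta {V A : C} (u : V ⟶ A) : P.map (prod.lift u u) (P.δ A) = ⊤ := by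
  have e : prod.lift u u = u ≫ diag A := by simp
  rw [e, ← P.map_map, P.diag_delta, P.map_top]

lemma leibniz {V X' A : C} (φ : P.obj (X' ⨯ A)) (w : V ⟶ X') (u v : V ⟶ A) :
    P.map (prod.lift w u) φ ⊓ P.map (prod.lift u v) (P.δ A) ≤
      P.map (prod.lift w v) φ := by
  have h0 : φ ≤ P.map (prod.map (𝟙 X') (diag A))
      (P.map (prod.map (𝟙 X') prod.snd) φ) := by
    rw [P.map_map]
    have e : prod.map (𝟙 X') (diag A) ≫ prod.map (𝟙 X') prod.snd = 𝟙 _ := by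
      simp [prod.map_map]
    rw [e, P.map_id]
  have h1 := (P.elem φ (P.map (prod.map (𝟙 X') prod.snd) φ)).mpr h0
  have h2 := P.map_mono (prod.lift w (prod.lift u v)) h1
  rw [P.map_inf, P.map_map, P.map_map, P.map_map] at h2
  have e1 : prod.lift w (prod.lift u v) ≫ prod.map (𝟙 X') prod.fst = prod.lift w u := by simp
  have e2 : prod.lift w (prod.lift u v) ≫ (prod.snd : X' ⨯ (A ⨯ A) ⟶ A ⨯ A) =
      prod.lift u v := by simp
  have e3 : prod.lift w (prod.lift u v) ≫ prod.map (𝟙 X') prod.snd = prod.lift w v := by simp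
  rw [e1, e2, e3] at h2
  exact h2

lemma delta_symm {V A : C} (u v : V ⟶ A) :
    P.map (prod.lift u v) (P.δ A) ≤ P.map (prod.lift v u) (P.δ A) := by
  have h := P.leibniz (P.map (prod.lift prod.snd prod.fst) (P.δ A)) u u v
  rw [P.map_map, P.map_map] at h
  have e1 : prod.lift u u ≫ prod.lift prod.snd prod.fst = prod.lift u u := by simp
  have e2 : prod.lift u v ≫ prod.lift prod.snd prod.fst = prod.lift v u := by simp
  rw [e1, e2, P.pair_self_delta] at h
  simpa using h

lemma delta_trans {V A : C} (w u v : V ⟶ A) :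
    P.map (prod.lift w u) (P.δ A) ⊓ P.map (prod.lift u v) (P.δ A) ≤
      P.map (prod.lift w v) (P.δ A) :=
  P.leibniz (P.δ A) w u v

end EED

namespace EED

variable (P : EED C)

lemma delta_prod_le_fst (A B : C) :
    P.δ (A ⨯ B) ≤ P.map (prod.map prod.fst prod.fst) (P.δ A) := by
  have h := P.leibniz (P.map (prod.lift prod.fst (prod.snd ≫ prod.fst)) (P.δ A))
    (prod.fst ≫ prod.fst : (A ⨯ B) ⨯ (A ⨯ B) ⟶ A) prod.fst prod.snd
  rw [P.map_map, P.map_map] at h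
  have e1 : prod.lift (prod.fst ≫ prod.fst) (prod.fst : (A ⨯ B) ⨯ (A ⨯ B) ⟶ A ⨯ B) ≫
      prod.lift prod.fst (prod.snd ≫ prod.fst) =
      prod.lift (prod.fst ≫ prod.fst) (prod.fst ≫ prod.fst) := by simp
  have e2 : prod.lift (prod.fst ≫ prod.fst) (prod.snd : (A ⨯ B) ⨯ (A ⨯ B) ⟶ A ⨯ B) ≫
      prod.lift prod.fst (prod.snd ≫ prod.fst) =
      prod.map prod.fst prod.fst := by ext <;> simp
  have e3 : prod.lift (prod.fst : (A ⨯ B) ⨯ (A ⨯ B) ⟶ A ⨯ B) prod.snd = 𝟙 _ := by simp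
  rw [e1, e2, e3, P.map_id, P.pair_self_delta] at h
  simpa using h

lemma delta_prod_le_snd (A B : C) :
    P.δ (A ⨯ B) ≤ P.map (prod.map prod.snd prod.snd) (P.δ B) := by
  have h := P.leibniz (P.map (prod.lift prod.fst (prod.snd ≫ prod.snd)) (P.δ B))
    (prod.fst ≫ prod.snd : (A ⨯ B) ⨯ (A ⨯ B) ⟶ B) prod.fst prod.snd
  rw [P.map_map, P.map_map] at h
  have e1 : prod.lift (prod.fst ≫ prod.snd) (prod.fst : (A ⨯ B) ⨯ (A ⨯ B) ⟶ A ⨯ B) ≫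
      prod.lift prod.fst (prod.snd ≫ prod.snd) =
      prod.lift (prod.fst ≫ prod.snd) (prod.fst ≫ prod.snd) := by simp
  have e2 : prod.lift (prod.fst ≫ prod.snd) (prod.snd : (A ⨯ B) ⨯ (A ⨯ B) ⟶ A ⨯ B) ≫
      prod.lift prod.fst (prod.snd ≫ prod.snd) =
      prod.map prod.snd prod.snd := by ext <;> simp
  have e3 : prod.lift (prod.fst : (A ⨯ B) ⨯ (A ⨯ B) ⟶ A ⨯ B) prod.snd = 𝟙 _ := by simp
  rw [e1, e2, e3, P.map_id, P.pair_self_delta] at h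
  simpa using h

lemma delta_pair_fst {V A B : C} (u₁ v₁ : V ⟶ A) (w : V ⟶ B) :
    P.map (prod.lift u₁ v₁) (P.δ A) ≤
      P.map (prod.lift (prod.lift u₁ w) (prod.lift v₁ w)) (P.δ (A ⨯ B)) := by
  have h := P.leibniz
    (P.map (prod.lift prod.fst (prod.lift prod.snd (prod.fst ≫ prod.snd))) (P.δ (A ⨯ B)))
    (prod.lift u₁ w) u₁ v₁
  rw [P.map_map, P.map_map] at h
  have e1 : prod.lift (prod.lift u₁ w) u₁ ≫
      prod.lift prod.fst (prod.lift prod.snd (prod.fst ≫ prod.snd)) =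
      prod.lift (prod.lift u₁ w) (prod.lift u₁ w) := by ext <;> simp
  have e2 : prod.lift (prod.lift u₁ w) v₁ ≫
      prod.lift prod.fst (prod.lift prod.snd (prod.fst ≫ prod.snd)) =
      prod.lift (prod.lift u₁ w) (prod.lift v₁ w) := by ext <;> simp
  rw [e1, e2, P.pair_self_delta] at h
  simpa using h

lemma delta_pair_snd {V A B : C} (z : V ⟶ A) (u₂ v₂ : V ⟶ B) :
    P.map (prod.lift u₂ v₂) (P.δ B) ≤
      P.map (prod.lift (prod.lift z u₂) (prod.lift z v₂)) (P.δ (A ⨯ B)) := by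
  have h := P.leibniz
    (P.map (prod.lift prod.fst (prod.lift (prod.fst ≫ prod.fst) prod.snd)) (P.δ (A ⨯ B)))
    (prod.lift z u₂) u₂ v₂
  rw [P.map_map, P.map_map] at h
  have e1 : prod.lift (prod.lift z u₂) u₂ ≫
      prod.lift prod.fst (prod.lift (prod.fst ≫ prod.fst) prod.snd) =
      prod.lift (prod.lift z u₂) (prod.lift z u₂) := by ext <;> simp
  have e2 : prod.lift (prod.lift z u₂) v₂ ≫
      prod.lift prod.fst (prod.lift (prod.fst ≫ prod.fst) prod.snd) =
      prod.lift (prod.lift z u₂) (prod.lift z v₂) := by ext <;> simp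
  rw [e1, e2, P.pair_self_delta] at h
  simpa using h

lemma delta_prod_ge (A B : C) :
    P.map (prod.map prod.fst prod.fst) (P.δ A) ⊓
      P.map (prod.map prod.snd prod.snd) (P.δ B) ≤ P.δ (A ⨯ B) := by
  set m : (A ⨯ B) ⨯ (A ⨯ B) ⟶ A ⨯ B :=
    prod.lift (prod.snd ≫ prod.fst) (prod.fst ≫ prod.snd) with hm
  have h1 : P.map (prod.map prod.fst prod.fst) (P.δ A) ≤
      P.map (prod.lift prod.fst m) (P.δ (A ⨯ B)) := by
    have h := P.delta_pair_fst (prod.fst ≫ prod.fst : (A ⨯ B) ⨯ (A ⨯ B) ⟶ A)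
      (prod.snd ≫ prod.fst) (prod.fst ≫ prod.snd)
    have e1 : prod.lift (prod.fst ≫ prod.fst) (prod.snd ≫ prod.fst) =
        (prod.map prod.fst prod.fst : (A ⨯ B) ⨯ (A ⨯ B) ⟶ A ⨯ A) := by ext <;> simp
    have e2 : prod.lift (prod.fst ≫ prod.fst) (prod.fst ≫ prod.snd) =
        (prod.fst : (A ⨯ B) ⨯ (A ⨯ B) ⟶ A ⨯ B) := by ext <;> simp
    rw [e1, e2] at h
    exact h
  have h2 : P.map (prod.map prod.snd prod.snd) (P.δ B) ≤
      P.map (prod.lift m prod.snd) (P.δ (A ⨯ B)) := by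
    have h := P.delta_pair_snd (prod.snd ≫ prod.fst : (A ⨯ B) ⨯ (A ⨯ B) ⟶ A)
      (prod.fst ≫ prod.snd) (prod.snd ≫ prod.snd)
    have e1 : prod.lift (prod.fst ≫ prod.snd) (prod.snd ≫ prod.snd) =
        (prod.map prod.snd prod.snd : (A ⨯ B) ⨯ (A ⨯ B) ⟶ B ⨯ B) := by ext <;> simp
    have e2 : prod.lift (prod.snd ≫ prod.fst) (prod.snd ≫ prod.snd) =
        (prod.snd : (A ⨯ B) ⨯ (A ⨯ B) ⟶ A ⨯ B) := by ext <;> simp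
    rw [e1, e2] at h
    exact h
  have h3 := P.delta_trans (prod.fst : (A ⨯ B) ⨯ (A ⨯ B) ⟶ A ⨯ B) m prod.snd
  have e : prod.lift (prod.fst : (A ⨯ B) ⨯ (A ⨯ B) ⟶ A ⨯ B) prod.snd = 𝟙 _ := by simp
  rw [e, P.map_id] at h3
  exact le_trans (inf_le_inf h1 h2) h3

end EED

namespace EED

variable (P : EED C)

lemma exFst_le_of_section {V A : C} (s : V ⟶ V ⨯ A) (hs : s ≫ prod.fst = 𝟙 V)
    (β : P.obj (V ⨯ A)) : P.map s β ≤ P.exFst β := by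
  have h := (P.exFst_adj β (P.exFst β)).mp le_rfl
  have h2 := P.map_mono s h
  rw [P.map_map, hs, P.map_id] at h2
  exact h2

lemma graph_terminal (X : C) : P.graph (terminal.from X) = ⊤ := by
  have e : prod.map (terminal.from X) (𝟙 (⊤_ C)) =
      terminal.from (X ⨯ ⊤_ C) ≫ diag (⊤_ C) := by
    apply Limits.prod.hom_ext <;> apply terminal.hom_ext
  show P.map (prod.map (terminal.from X) (𝟙 (⊤_ C))) (P.δ (⊤_ C)) = ⊤
  rw [e, ← P.map_map, P.diag_delta, P.map_top]

lemma graph_rcomp {X Y Z : C} (f : X ⟶ Y) (S : P.obj (Y ⨯ Z)) :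
    P.rcomp (P.graph f) S = P.map (prod.map f (𝟙 Z)) S := by
  show P.exFst (P.map (prod.lift (prod.fst ≫ prod.fst) prod.snd)
      (P.map (prod.map f (𝟙 Y)) (P.δ Y)) ⊓
      P.map (prod.lift prod.snd (prod.fst ≫ prod.snd)) S) = _
  rw [P.map_map]
  have ek : prod.lift (prod.fst ≫ prod.fst) (prod.snd : (X ⨯ Z) ⨯ Y ⟶ Y) ≫
      prod.map f (𝟙 Y) = prod.lift (prod.fst ≫ prod.fst ≫ f) prod.snd := by
    ext <;> simp
  rw [ek]
  apply le_antisymm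
  · rw [P.exFst_adj]
    have hsym := P.delta_symm (prod.fst ≫ prod.fst ≫ f : (X ⨯ Z) ⨯ Y ⟶ Y) prod.snd
    have hl := P.leibniz (P.map (prod.lift prod.snd prod.fst) S)
      (prod.fst ≫ prod.snd : (X ⨯ Z) ⨯ Y ⟶ Z) prod.snd (prod.fst ≫ prod.fst ≫ f)
    rw [P.map_map, P.map_map] at hl
    have e1 : prod.lift (prod.fst ≫ prod.snd) (prod.snd : (X ⨯ Z) ⨯ Y ⟶ Y) ≫
        prod.lift prod.snd prod.fst =
        prod.lift prod.snd (prod.fst ≫ prod.snd) := by ext <;> simp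
    have e2 : prod.lift (prod.fst ≫ prod.snd) (prod.fst ≫ prod.fst ≫ f :
        (X ⨯ Z) ⨯ Y ⟶ Y) ≫ prod.lift prod.snd prod.fst =
        prod.lift (prod.fst ≫ prod.fst ≫ f) (prod.fst ≫ prod.snd) := by ext <;> simp
    rw [e1, e2] at hl
    have e3 : prod.lift (prod.fst ≫ prod.fst ≫ f) (prod.fst ≫ prod.snd) =
        (prod.fst : (X ⨯ Z) ⨯ Y ⟶ X ⨯ Z) ≫ prod.map f (𝟙 Z) := by ext <;> simp
    rw [e3, ← P.map_map] at hl
    refine le_trans ?_ hl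
    exact le_inf inf_le_right (le_trans inf_le_left hsym)
  · have hs : prod.lift (𝟙 (X ⨯ Z)) (prod.fst ≫ f) ≫ prod.fst = 𝟙 (X ⨯ Z) := by simp
    have h := P.exFst_le_of_section (prod.lift (𝟙 (X ⨯ Z)) (prod.fst ≫ f)) hs
      (P.map (prod.lift (prod.fst ≫ prod.fst ≫ f) prod.snd) (P.δ Y) ⊓
        P.map (prod.lift prod.snd (prod.fst ≫ prod.snd)) S)
    rw [P.map_inf, P.map_map, P.map_map] at h
    have e1 : prod.lift (𝟙 (X ⨯ Z)) (prod.fst ≫ f) ≫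
        prod.lift (prod.fst ≫ prod.fst ≫ f) prod.snd =
        prod.lift (prod.fst ≫ f) (prod.fst ≫ f) := by ext <;> simp
    have e2 : prod.lift (𝟙 (X ⨯ Z)) (prod.fst ≫ f) ≫
        prod.lift prod.snd (prod.fst ≫ prod.snd) = prod.map f (𝟙 Z) := by ext <;> simp
    rw [e1, e2, P.pair_self_delta] at h
    simpa using h

lemma rcomp_graph_terminal {X Y : C} (R : P.obj (X ⨯ Y)) :
    P.rcomp R (P.graph (terminal.from Y)) = P.map prod.fst (P.exFst R) := by
  show P.exFst (P.map (prod.lift (prod.fst ≫ prod.fst) prod.snd) R ⊓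
      P.map (prod.lift prod.snd (prod.fst ≫ prod.snd)) (P.graph (terminal.from Y))) = _
  rw [P.graph_terminal, P.map_top, inf_top_eq]
  have e : prod.lift (prod.fst ≫ prod.fst) (prod.snd : (X ⨯ ⊤_ C) ⨯ Y ⟶ Y) =
      prod.map prod.fst (𝟙 Y) := by ext <;> simp
  rw [e, P.bcFst]

end EED

namespace EED

variable (P : EED C)

lemma rcomp_graph_diag {X Y : C} (R : P.obj (X ⨯ Y)) :
    P.rcomp R (P.graph (diag Y)) =
      P.map (prod.map (𝟙 X) prod.fst) R ⊓ P.map prod.snd (P.δ Y) := by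
  show P.exFst (P.map (prod.lift (prod.fst ≫ prod.fst) prod.snd) R ⊓
      P.map (prod.lift prod.snd (prod.fst ≫ prod.snd))
        (P.map (prod.map (diag Y) (𝟙 (Y ⨯ Y))) (P.δ (Y ⨯ Y)))) = _
  rw [P.map_map]
  have em : prod.lift prod.snd (prod.fst ≫ prod.snd :
      (X ⨯ (Y ⨯ Y)) ⨯ Y ⟶ Y ⨯ Y) ≫ prod.map (diag Y) (𝟙 (Y ⨯ Y)) =
      prod.lift (prod.lift prod.snd prod.snd) (prod.fst ≫ prod.snd) := by
    ext <;> simp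
  rw [em]
  set W := (X ⨯ (Y ⨯ Y)) ⨯ Y
  set m : W ⟶ (Y ⨯ Y) ⨯ (Y ⨯ Y) :=
    prod.lift (prod.lift prod.snd prod.snd) (prod.fst ≫ prod.snd) with hm
  have ha : P.map m (P.δ (Y ⨯ Y)) ≤
      P.map (prod.lift prod.snd (prod.fst ≫ prod.snd ≫ prod.fst)) (P.δ Y) := by
    have h := P.map_mono m (P.delta_prod_le_fst Y Y)
    rw [P.map_map] at h
    have e : m ≫ prod.map prod.fst prod.fst =
        prod.lift prod.snd (prod.fst ≫ prod.snd ≫ prod.fst) := by ext <;> simp [hm]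
    rwa [e] at h
  have hb : P.map m (P.δ (Y ⨯ Y)) ≤
      P.map (prod.lift prod.snd (prod.fst ≫ prod.snd ≫ prod.snd)) (P.δ Y) := by
    have h := P.map_mono m (P.delta_prod_le_snd Y Y)
    rw [P.map_map] at h
    have e : m ≫ prod.map prod.snd prod.snd =
        prod.lift prod.snd (prod.fst ≫ prod.snd ≫ prod.snd) := by ext <;> simp [hm]
    rwa [e] at h
  apply le_antisymm
  · rw [P.exFst_adj, P.map_inf, P.map_map, P.map_map]
    have e1 : (prod.fst : W ⟶ X ⨯ (Y ⨯ Y)) ≫ prod.map (𝟙 X) prod.fst =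
        prod.lift (prod.fst ≫ prod.fst) (prod.fst ≫ prod.snd ≫ prod.fst) := by
      ext <;> simp
    have e2 : (prod.fst : W ⟶ X ⨯ (Y ⨯ Y)) ≫ prod.snd =
        prod.fst ≫ prod.snd := rfl
    rw [e1, e2]
    refine le_inf ?_ ?_
    · -- first component : use leibniz on R
      have hl := P.leibniz R (prod.fst ≫ prod.fst : W ⟶ X) prod.snd
        (prod.fst ≫ prod.snd ≫ prod.fst)
      refine le_trans (le_inf inf_le_left (le_trans inf_le_right ha)) hl
    · -- second component : y₁ = y₂ from (y,y)=(y₁,y₂)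
      have hsym := P.delta_symm (prod.snd : W ⟶ Y) (prod.fst ≫ prod.snd ≫ prod.fst)
      have ht := P.delta_trans (prod.fst ≫ prod.snd ≫ prod.fst : W ⟶ Y) prod.snd
        (prod.fst ≫ prod.snd ≫ prod.snd)
      have e3 : prod.lift (prod.fst ≫ prod.snd ≫ prod.fst)
          (prod.fst ≫ prod.snd ≫ prod.snd : W ⟶ Y) =
          prod.fst ≫ prod.snd := by ext <;> simp
      rw [e3] at ht
      refine le_trans ?_ ht
      refine le_trans inf_le_right ?_
      exact le_inf (le_trans ha hsym) hb
  · have hs : prod.lift (𝟙 (X ⨯ (Y ⨯ Y))) (prod.snd ≫ prod.fst) ≫ prod.fst =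
        𝟙 (X ⨯ (Y ⨯ Y)) := by simp
    set s : X ⨯ (Y ⨯ Y) ⟶ W := prod.lift (𝟙 (X ⨯ (Y ⨯ Y))) (prod.snd ≫ prod.fst)
      with hsdef
    have h := P.exFst_le_of_section s hs
      (P.map (prod.lift (prod.fst ≫ prod.fst) prod.snd) R ⊓ P.map m (P.δ (Y ⨯ Y)))
    rw [P.map_inf, P.map_map, P.map_map] at h
    have e1 : s ≫ prod.lift (prod.fst ≫ prod.fst) prod.snd =
        prod.map (𝟙 X) prod.fst := by ext <;> simp [hsdef]
    have e2 : s ≫ m = prod.lift (prod.lift (prod.snd ≫ prod.fst)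
        (prod.snd ≫ prod.fst)) prod.snd := by ext <;> simp [hsdef, hm]
    rw [e1, e2] at h
    refine le_trans (inf_le_inf_left _ ?_) h
    -- D ≤ map ⟨⟨y₁,y₁⟩,(y₁,y₂)⟩ δ_{Y⨯Y}
    set m' : X ⨯ (Y ⨯ Y) ⟶ (Y ⨯ Y) ⨯ (Y ⨯ Y) :=
      prod.lift (prod.lift (prod.snd ≫ prod.fst) (prod.snd ≫ prod.fst)) prod.snd
      with hm'
    have hg := P.map_mono m' (P.delta_prod_ge Y Y)
    rw [P.map_inf, P.map_map, P.map_map] at hg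
    have e3 : m' ≫ prod.map prod.fst prod.fst =
        prod.lift (prod.snd ≫ prod.fst) (prod.snd ≫ prod.fst) := by ext <;> simp [hm']
    have e4 : m' ≫ prod.map prod.snd prod.snd =
        (prod.snd : X ⨯ (Y ⨯ Y) ⟶ Y ⨯ Y) := by ext <;> simp [hm']
    rw [e3, e4, P.pair_self_delta] at hg
    simpa using hg

end EED

/-- In `Bicat_P`, a relation `R ∈ P(X ⨯ Y)` is a map (a strict comonoid
homomorphism for the comonoids transported along the graph functor) if and only
if it is total (`∃_{π₁}(R) = ⊤`) and single-valued
(`P_{⟨π₁,π₂⟩}(R) ⊓ P_{⟨π₁,π₃⟩}(R) ≤ P_{⟨π₂,π₃⟩}(δ_Y)`). -/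
theorem map_iff_total_and_single_valued (P : EED C) {X Y : C} (R : P.obj (X ⨯ Y)) :
    (P.rcomp R (P.graph (diag Y)) = P.rcomp (P.graph (diag X)) (P.rtensor R R) ∧
     P.rcomp R (P.graph (terminal.from Y)) = P.graph (terminal.from X)) ↔
    (P.exFst R = (⊤ : P.obj X) ∧
     P.map (prod.map (𝟙 X) prod.fst : X ⨯ (Y ⨯ Y) ⟶ X ⨯ Y) R ⊓
       P.map (prod.lift prod.fst (prod.snd ≫ prod.snd) : X ⨯ (Y ⨯ Y) ⟶ X ⨯ Y) R ≤
     P.map (prod.snd : X ⨯ (Y ⨯ Y) ⟶ Y ⨯ Y) (P.δ Y)) := by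
  have hrhs : P.rcomp (P.graph (diag X)) (P.rtensor R R) =
      P.map (prod.map (𝟙 X) prod.fst : X ⨯ (Y ⨯ Y) ⟶ X ⨯ Y) R ⊓
      P.map (prod.lift prod.fst (prod.snd ≫ prod.snd) : X ⨯ (Y ⨯ Y) ⟶ X ⨯ Y) R := by
    rw [P.graph_rcomp]
    show P.map (prod.map (diag X) (𝟙 (Y ⨯ Y)))
      (P.map (prod.map prod.fst prod.fst) R ⊓ P.map (prod.map prod.snd prod.snd) R) = _
    rw [P.map_inf, P.map_map, P.map_map]
    have e1 : prod.map (diag X) (𝟙 (Y ⨯ Y)) ≫ prod.map prod.fst prod.fst =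
        prod.map (𝟙 X) prod.fst := by ext <;> simp
    have e2 : prod.map (diag X) (𝟙 (Y ⨯ Y)) ≫ prod.map prod.snd prod.snd =
        prod.lift prod.fst (prod.snd ≫ prod.snd) := by ext <;> simp
    rw [e1, e2]
  constructor
  · rintro ⟨h1, h2⟩
    have htot : P.exFst R = ⊤ := by
      rw [P.rcomp_graph_terminal, P.graph_terminal] at h2
      have h3 := congrArg (P.map (prod.lift (𝟙 X) (terminal.from X))) h2
      rw [P.map_map, P.map_top, prod.lift_fst, P.map_id] at h3
      exact h3
    refine ⟨htot, ?_⟩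
    rw [P.rcomp_graph_diag, hrhs] at h1
    rw [← h1]
    exact inf_le_right
  · rintro ⟨htot, hsv⟩
    constructor
    · rw [P.rcomp_graph_diag, hrhs]
      apply le_antisymm
      · refine le_inf inf_le_left ?_
        have hl := P.leibniz R (prod.fst : X ⨯ (Y ⨯ Y) ⟶ X) (prod.snd ≫ prod.fst)
          (prod.snd ≫ prod.snd)
        have e1 : prod.lift (prod.fst : X ⨯ (Y ⨯ Y) ⟶ X) (prod.snd ≫ prod.fst) =
            prod.map (𝟙 X) prod.fst := by ext <;> simp
        have e2 : prod.lift (prod.snd ≫ prod.fst) (prod.snd ≫ prod.snd :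
            X ⨯ (Y ⨯ Y) ⟶ Y) = (prod.snd : X ⨯ (Y ⨯ Y) ⟶ Y ⨯ Y) := by ext <;> simp
        rw [e1, e2] at hl
        exact hl
      · exact le_inf inf_le_left hsv
    · rw [P.rcomp_graph_terminal, P.graph_terminal, htot, P.map_top]
end
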